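/- arXiv:1511.04152 — 2 statements merged into one kernel-verified Lean document; each statement's English description precedes it below -/
import Mathlib

section
/- Conversely, if the deformation γ ↦ γ̄ of discrete plane curves preserves all turning angles (κ̄ₙ = κₙ for all n), then there exist a positive function Hₙ and an n-independent angle a such that T̄ₙ = Hₙ φₙ (cos a, sin a)ᵀ. -/
/-- Rotation matrix by angle `θ`. -/
noncomputable def rot (θ : ℝ) : Matrix (Fin 2) (Fin 2) ℝ :=
  !![Real.cos θ, -Real.sin θ; Real.sin θ, Real.cos θ]

/-- Similarity Frenet frame `φₙ = [Tₙ, R(π/2)Tₙ]` of a discrete curve. -/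
noncomputable def simFrame (γ : ℤ → Fin 2 → ℝ) (n : ℤ) : Matrix (Fin 2) (Fin 2) ℝ :=
  !![γ (n+1) 0 - γ n 0, -(γ (n+1) 1 - γ n 1);
     γ (n+1) 1 - γ n 1,   γ (n+1) 0 - γ n 0]

lemma rot_mul (θ φ : ℝ) : rot θ * rot φ = rot (θ + φ) := by
  ext i j
  fin_cases i <;> fin_cases j <;>
    simp [rot, Matrix.mul_apply, Fin.sum_univ_two, Real.cos_add, Real.sin_add] <;> ring

lemma rot_zero : rot 0 = 1 := by
  ext i j
  fin_cases i <;> fin_cases j <;> simp [rot, Matrix.one_apply]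

lemma rot_neg_mulVec (θ : ℝ) (v : Fin 2 → ℝ) :
    (rot (-θ)).mulVec ((rot θ).mulVec v) = v := by
  rw [Matrix.mulVec_mulVec, rot_mul, neg_add_cancel, rot_zero, Matrix.one_mulVec]

/-- a unit vector is (cos θ, sin θ) -/
lemma exists_angle (x y : ℝ) (h : x ^ 2 + y ^ 2 = 1) :
    ∃ θ : ℝ, Real.cos θ = x ∧ Real.sin θ = y := by
  set z : ℂ := ⟨x, y⟩ with hz
  have hns : Complex.normSq z = 1 := by
    simp only [Complex.normSq_mk, hz]; nlinarith [h]
  have hzabs : ‖z‖ = 1 := by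
    rw [Complex.norm_def, hns, Real.sqrt_one]
  have hz0 : z ≠ 0 := by
    intro h0; rw [h0] at hzabs; simp at hzabs
  refine ⟨Complex.arg z, ?_, ?_⟩
  · rw [Complex.cos_arg hz0, hzabs]; simp [hz]
  · rw [Complex.sin_arg, hzabs]; simp [hz]

/-- If a deformation of discrete plane curves preserves all turning angles (`κ̄ₙ = κₙ`),
then there are `Hₙ > 0` and an `n`-independent angle `a` with
`T̄ₙ = Hₙ φₙ (cos a, sin a)ᵀ`. -/
theorem stmt11 (γ γb : ℤ → Fin 2 → ℝ) (q qb κ κb : ℤ → ℝ)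
    (hq : ∀ n, q n = Real.sqrt ((γ (n+1) 0 - γ n 0) ^ 2 + (γ (n+1) 1 - γ n 1) ^ 2))
    (hqb : ∀ n, qb n = Real.sqrt ((γb (n+1) 0 - γb n 0) ^ 2 + (γb (n+1) 1 - γb n 1) ^ 2))
    (hqpos : ∀ n, 0 < q n) (hqbpos : ∀ n, 0 < qb n)
    (hκ : ∀ n, κ n ∈ Set.Ioo (0 : ℝ) (2 * Real.pi))
    (hκb : ∀ n, κb n ∈ Set.Ioo (0 : ℝ) (2 * Real.pi))
    (hrot : ∀ n, (q n)⁻¹ • (γ (n+1) - γ n)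
      = (rot (κ n)).mulVec ((q (n-1))⁻¹ • (γ n - γ (n-1))))
    (hrotb : ∀ n, (qb n)⁻¹ • (γb (n+1) - γb n)
      = (rot (κb n)).mulVec ((qb (n-1))⁻¹ • (γb n - γb (n-1))))
    (hiso : ∀ n, κb n = κ n) :
    ∃ H : ℤ → ℝ, (∀ n, 0 < H n) ∧ ∃ a : ℝ,
      ∀ n, γb (n+1) - γb n = H n • (simFrame γ n).mulVec ![Real.cos a, Real.sin a] := by
  set u : ℤ → Fin 2 → ℝ := fun n => (q n)⁻¹ • (γ (n+1) - γ n) with hu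
  set ub : ℤ → Fin 2 → ℝ := fun n => (qb n)⁻¹ • (γb (n+1) - γb n) with hub
  have hq0 : ∀ n, q n ≠ 0 := fun n => (hqpos n).ne'
  have hqb0 : ∀ n, qb n ≠ 0 := fun n => (hqbpos n).ne'
  -- recursion in clean form
  have hrec : ∀ n : ℤ, u (n + 1) = (rot (κ (n+1))).mulVec (u n) := by
    intro n
    have := hrot (n + 1)
    simpa [hu, add_sub_cancel_right] using this
  have hrecb : ∀ n : ℤ, ub (n + 1) = (rot (κ (n+1))).mulVec (ub n) := by
    intro n
    have := hrotb (n + 1)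
    rw [hiso] at this
    simpa [hub, add_sub_cancel_right] using this
  -- unit vectors
  have hunit : (u 0 0) ^ 2 + (u 0 1) ^ 2 = 1 := by
    have hs : (γ (1:ℤ) 0 - γ 0 0) ^ 2 + (γ (1:ℤ) 1 - γ 0 1) ^ 2 = q 0 ^ 2 := by
      have h0 := hq 0
      norm_num at h0
      rw [h0, Real.sq_sqrt (by positivity)]
    have hn := hq0 0
    simp only [hu, Pi.smul_apply, Pi.sub_apply, smul_eq_mul, zero_add]
    field_simp
    linarith [hs]
  have hunitb : (ub 0 0) ^ 2 + (ub 0 1) ^ 2 = 1 := by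
    have hs : (γb (1:ℤ) 0 - γb 0 0) ^ 2 + (γb (1:ℤ) 1 - γb 0 1) ^ 2 = qb 0 ^ 2 := by
      have h0 := hqb 0
      norm_num at h0
      rw [h0, Real.sq_sqrt (by positivity)]
    have hn := hqb0 0
    simp only [hub, Pi.smul_apply, Pi.sub_apply, smul_eq_mul, zero_add]
    field_simp
    linarith [hs]
  obtain ⟨θ, hθc, hθs⟩ := exists_angle _ _ hunit
  obtain ⟨θb, hθbc, hθbs⟩ := exists_angle _ _ hunitb
  set a := θb - θ with ha
  -- key claim
  have key : ∀ n : ℤ, ub n = (rot a).mulVec (u n) := by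
    intro n
    induction n using Int.induction_on with
    | zero =>
      funext i
      fin_cases i <;>
        simp [rot, Matrix.mulVec, dotProduct, Fin.sum_univ_two]
      · rw [← hθbc, ← hθc, ← hθs, ha, Real.cos_sub, Real.sin_sub]
        linear_combination (-Real.cos θb) * Real.sin_sq_add_cos_sq θ
      · rw [← hθbs, ← hθc, ← hθs, ha, Real.cos_sub, Real.sin_sub]
        linear_combination (-Real.sin θb) * Real.sin_sq_add_cos_sq θ
    | succ n ih =>
      rw [hrecb, hrec, ih, Matrix.mulVec_mulVec, Matrix.mulVec_mulVec,
        rot_mul, rot_mul, add_comm]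
    | pred n ih =>
      have h1 : u (-(n:ℤ) - 1) = (rot (-(κ (-n)))).mulVec (u (-n)) := by
        have := hrec (-(n:ℤ) - 1)
        rw [sub_add_cancel] at this
        rw [this, rot_neg_mulVec]
      have h1b : ub (-(n:ℤ) - 1) = (rot (-(κ (-n)))).mulVec (ub (-n)) := by
        have := hrecb (-(n:ℤ) - 1)
        rw [sub_add_cancel] at this
        rw [this, rot_neg_mulVec]
      rw [h1b, h1, ih, Matrix.mulVec_mulVec, Matrix.mulVec_mulVec,
        rot_mul, rot_mul, add_comm]
  refine ⟨fun n => qb n / q n, fun n => div_pos (hqbpos n) (hqpos n), a, fun n => ?_⟩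
  have h := key n
  funext i
  have h0 := congrFun h 0
  have h1 := congrFun h 1
  simp only [hu, hub, rot, Matrix.mulVec, dotProduct, Fin.sum_univ_two,
    Pi.smul_apply, Pi.sub_apply, smul_eq_mul, Matrix.cons_val', Matrix.cons_val_zero,
    Matrix.cons_val_one, Matrix.head_cons, Matrix.empty_val', Matrix.cons_val_fin_one,
    Matrix.head_fin_const, Matrix.of_apply] at h0 h1
  fin_cases i <;>
    · simp only [simFrame, Matrix.mulVec, dotProduct, Fin.sum_univ_two,
        Pi.smul_apply, Pi.sub_apply, smul_eq_mul, Matrix.cons_val', Matrix.cons_val_zero,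
        Matrix.cons_val_one, Matrix.head_cons, Matrix.empty_val', Matrix.cons_val_fin_one,
        Matrix.head_fin_const, Matrix.of_apply, Fin.zero_eta, Fin.mk_one]
      have hqn := hq0 n
      have hqbn := hqb0 n
      field_simp at h0 h1 ⊢
      linarith [h0, h1]
end

section
/- Let q^m_n > 0 satisfy the discrete heat equation (q^{m+1}_n - q^m_n)/δ = (q^m_{n+1} - 2 q^m_n cos ε + q^m_{n-1})/ε², with δ, ε > 0. Then u^m_n = q^m_{n+1}/q^m_n satisfies the discrete Burgers equation u^{m+1}_n / u^m_n = [1 + (δ/ε²)(u^m_{n+1} - 2cos ε + 1/u^m_n)] / [1 + (δ/ε²)(u^m_n - 2cos ε + 1/u^m_{n-1})], assuming the denominators are nonzero. -/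
/-- If `q^m_n > 0` solves the discrete heat equation
`(q^{m+1}_n - q^m_n)/δ = (q^m_{n+1} - 2 q^m_n cos ε + q^m_{n-1})/ε²`, then
`u^m_n = q^m_{n+1}/q^m_n` solves the discrete Burgers equation. -/
theorem stmt13 (δ ε : ℝ) (hδ : 0 < δ) (hε : 0 < ε)
    (q : ℤ → ℤ → ℝ) (hq : ∀ m n, 0 < q m n)
    (heat : ∀ m n, (q (m+1) n - q m n) / δ
      = (q m (n+1) - 2 * q m n * Real.cos ε + q m (n-1)) / ε ^ 2)
    (u : ℤ → ℤ → ℝ) (hu : ∀ m n, u m n = q m (n+1) / q m n)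
    (hden : ∀ m n, 1 + δ / ε ^ 2 * (u m n - 2 * Real.cos ε + 1 / u m (n-1)) ≠ 0) :
    ∀ m n, u (m+1) n / u m n
      = (1 + δ / ε ^ 2 * (u m (n+1) - 2 * Real.cos ε + 1 / u m n))
        / (1 + δ / ε ^ 2 * (u m n - 2 * Real.cos ε + 1 / u m (n-1))) := by
  have hε2 : (ε : ℝ) ^ 2 ≠ 0 := by positivity
  have hδ' : (δ : ℝ) ≠ 0 := ne_of_gt hδ
  have key : ∀ m n : ℤ, q (m+1) n
      = q m n * (1 + δ / ε ^ 2 * (u m n - 2 * Real.cos ε + 1 / u m (n-1))) := by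
    intro m n
    have h := heat m n
    have h1 : u m n = q m (n+1) / q m n := hu m n
    have h2 : u m (n-1) = q m n / q m (n-1) := by
      have := hu m (n-1); simpa using this
    have hq1 := (hq m n).ne'
    have hq2 := (hq m (n-1)).ne'
    rw [h1, h2]
    field_simp at h ⊢
    linear_combination h
  intro m n
  have e1 : u (m+1) n = q (m+1) (n+1) / q (m+1) n := hu (m+1) n
  have e2 := key m n
  have e3 := key m (n+1)
  have hsimp : ((n:ℤ)+1-1) = n := by ring
  rw [hsimp] at e3
  have hq1 := (hq m n).ne'
  have hq2 := (hq m (n+1)).ne'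
  have hd := hden m n
  have habs : ∀ (a b A B : ℝ), a ≠ 0 → b ≠ 0 → B ≠ 0 →
      (b * A) / (a * B) / (b / a) = A / B := by
    intro a b A B ha hb hB
    field_simp
  rw [hu m n] at hd
  rw [e1, e2, e3, hu m n]
  exact habs _ _ _ _ hq1 hq2 hd
end
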